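/- Assume the event inequalities (G_1), (G_2), (G_3), (G_4), (G_5), (S_1), (S_2), (B_1) hold, that 0 < σ ≤ M_2, and that k ≤ c_*·n/log p for a sufficiently small constant c_* > 0. Then there exist a constant C > 0 and an integer p_0 (not depending on the particular X, y, β, ξ) such that for all p ≥ p_0: ρ_1(k) ≤ C‖ξ‖_2·(1/√n + k·log p/n)·σ ≤ ‖ξ‖_2·log p·(1/√n + k·log p/n)·σ̂, and ρ_2(k) ≤ C·k·√(log p/n)·σ ≤ log p·k·√(log p/n)·σ̂. -/

import Mathlib

open scoped ENNReal

noncomputable section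

namespace CIHD

/-- `‖β‖₀`: the number of nonzero coordinates of `β`. -/
def sparsity {p : ℕ} (β : Fin p → ℝ) : ℕ := Nat.card {i : Fin p // β i ≠ 0}

/-- the vector `ℓ₂` (Euclidean) norm. -/
def l2 {p : ℕ} (ξ : Fin p → ℝ) : ℝ := Real.sqrt (∑ j, (ξ j) ^ 2)

/-- the vector `ℓ∞` norm. -/
def vinf {p : ℕ} (v : Fin p → ℝ) : ℝ := ⨆ j, |v j|

/-- `‖X_{·j}‖₂`: the Euclidean norm of the `j`-th column of `X`. -/
def colNorm (n p : ℕ) (X : Fin n → Fin p → ℝ) (j : Fin p) : ℝ :=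
  Real.sqrt (∑ i, (X i j) ^ 2)

/-- `min_j ‖X_{·j}‖₂`. -/
def minCol (n p : ℕ) (X : Fin n → Fin p → ℝ) : ℝ := ⨅ j, colNorm n p X j

/-- `max_j ‖X_{·j}‖₂`. -/
def maxCol (n p : ℕ) (X : Fin n → Fin p → ℝ) : ℝ := ⨆ j, colNorm n p X j

/-- the restricted eigenvalue `κ(X, k, α₀)`. -/
def kappa (n p : ℕ) (X : Fin n → Fin p → ℝ) (k : ℕ) (α₀ : ℝ) : ℝ :=
  sInf {r | ∃ (J₀ : Finset (Fin p)) (δ : Fin p → ℝ),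
    J₀.card ≤ k ∧ δ ≠ 0 ∧ (∑ j ∈ J₀ᶜ, |δ j|) ≤ α₀ * ∑ j ∈ J₀, |δ j| ∧
      r = Real.sqrt (∑ i, (∑ j, X i j * δ j) ^ 2) /
        (Real.sqrt n * Real.sqrt (∑ j ∈ J₀, (δ j) ^ 2))}

/-- the scaled Lasso objective with penalty level `λ₀`, as a function of `(b, s)`. -/
def slObj (n p : ℕ) (lam : ℝ) (X : Fin n → Fin p → ℝ) (y : Fin n → ℝ)
    (bs : (Fin p → ℝ) × ℝ) : ℝ :=
  (∑ i, (y i - ∑ j, X i j * bs.1 j) ^ 2) / (2 * n * bs.2) + bs.2 / 2 +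
    lam * ∑ j, (colNorm n p X j / Real.sqrt n) * |bs.1 j|

/-- `(b, s)` is a scaled Lasso solution with penalty level `λ₀`. -/
def IsScaledLasso (n p : ℕ) (lam : ℝ) (X : Fin n → Fin p → ℝ) (y : Fin n → ℝ)
    (b : Fin p → ℝ) (s : ℝ) : Prop :=
  0 < s ∧ IsMinOn (slObj n p lam X y) {bs : (Fin p → ℝ) × ℝ | 0 < bs.2} (b, s)

/-- the normalized design `W = X D`, `D = diag(√n / ‖X_{·j}‖₂)`. -/
def Wmat (n p : ℕ) (X : Fin n → Fin p → ℝ) (i : Fin n) (j : Fin p) : ℝ :=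
  X i j * Real.sqrt n / colNorm n p X j

/-- the normalized coefficients `d = D⁻¹ β`. -/
def dvec (n p : ℕ) (X : Fin n → Fin p → ℝ) (β : Fin p → ℝ) (j : Fin p) : ℝ :=
  β j * colNorm n p X j / Real.sqrt n

/-- the oracle noise level `σ^{ora} = ‖y − Xβ‖₂ / √n`. -/
def sigOra (n p : ℕ) (X : Fin n → Fin p → ℝ) (y : Fin n → ℝ) (β : Fin p → ℝ) : ℝ :=
  Real.sqrt (∑ i, (y i - ∑ j, X i j * β j) ^ 2) / Real.sqrt n

/-- the `ℓ₁` cone invertibility factor `CIF₁(α₀, K, W)`. -/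
def CIF1 (n p : ℕ) (α₀ : ℝ) (K : Finset (Fin p)) (W : Fin n → Fin p → ℝ) : ℝ :=
  sInf {r | ∃ u : Fin p → ℝ, u ≠ 0 ∧
    (∑ j ∈ Kᶜ, |u j|) ≤ α₀ * ∑ j ∈ K, |u j| ∧
      r = (K.card : ℝ) *
          vinf (fun j => ∑ b, ((∑ i, W i j * W i b) / n) * u b) / ∑ j ∈ K, |u j|}

open Classical in
/-- the set `T = {j : |d_j| ≥ λ₀ σ^{ora}}`. -/
def Tset (n p : ℕ) (lam : ℝ) (X : Fin n → Fin p → ℝ) (y : Fin n → ℝ)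
    (β : Fin p → ℝ) : Finset (Fin p) :=
  Finset.univ.filter fun j => lam * sigOra n p X y β ≤ |dvec n p X β j|

/-- the quantity `τ`. -/
def tau (n p : ℕ) (ε₀ lam : ℝ) (X : Fin n → Fin p → ℝ) (y : Fin n → ℝ)
    (β : Fin p → ℝ) : ℝ :=
  (1 + ε₀) * lam *
    max ((4 / sigOra n p X y β) * ∑ j ∈ (Tset n p lam X y β)ᶜ, |dvec n p X β j|)
      (8 * lam * ((Tset n p lam X y β).card : ℝ) /
        CIF1 n p (2 * ε₀ + 1) (Tset n p lam X y β) (Wmat n p X))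

end CIHD

namespace CIHD

open Matrix

/-- the sample covariance matrix `Σ̂ = XᵀX / n`. -/
def Sigmahat (n p : ℕ) (X : Fin n → Fin p → ℝ) : Matrix (Fin p) (Fin p) ℝ :=
  Matrix.of fun a b => (∑ i, X i a * X i b) / n

/-- the upper `a`-quantile `z_a` of the standard normal distribution. -/
def zquant (a : ℝ) : ℝ :=
  sInf {t : ℝ | (ProbabilityTheory.gaussianReal 0 1 (Set.Ioi t)).toReal ≤ a}

/-- `1/M₁ ≤ λ_min(Ω) ≤ λ_max(Ω) ≤ M₁` for a symmetric matrix `Ω`, expressed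
through two-sided Rayleigh-quotient bounds. -/
def eigBounds {p : ℕ} (Ω : Matrix (Fin p) (Fin p) ℝ) (M₁ : ℝ) : Prop :=
  Ω.IsSymm ∧
    ∀ v : Fin p → ℝ,
      (1 / M₁) * (∑ j, (v j) ^ 2) ≤ v ⬝ᵥ Ω.mulVec v ∧
        v ⬝ᵥ Ω.mulVec v ≤ M₁ * (∑ j, (v j) ^ 2)

/-- the constant `C₁(X, k)`. -/
def C1fun (n p : ℕ) (M₁ : ℝ) (X : Fin n → Fin p → ℝ) (k : ℕ) : ℝ :=
  7000 * M₁ ^ 2 * (Real.sqrt n / minCol n p X) *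
    max 1.25 (912 * (maxCol n p X) ^ 2 /
      (n * (kappa n p X k (405 * (maxCol n p X / minCol n p X))) ^ 2))

/-- the half-length `ρ₁(k)`. -/
def rho1 (n p : ℕ) (α M₁ : ℝ) (ξ : Fin p → ℝ) (X : Fin n → Fin p → ℝ)
    (u : Fin p → ℝ) (shat : ℝ) (k : ℕ) : ℝ :=
  l2 ξ * shat *
    min (1.01 * Real.sqrt ((u ⬝ᵥ (Sigmahat n p X).mulVec u) / (n * (l2 ξ) ^ 2)) *
          zquant (α / 2) + C1fun n p M₁ X k * k * Real.log p / n)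
      (Real.log p * (1 / Real.sqrt n + k * Real.log p / n))

/-- the constant `C₂(X, k)`. -/
def C2fun (n p : ℕ) (X : Fin n → Fin p → ℝ) (k : ℕ) : ℝ :=
  822 * (Real.sqrt n / minCol n p X) *
    max 1.25 (912 * (maxCol n p X) ^ 2 /
      (n * (kappa n p X k (405 * (maxCol n p X / minCol n p X))) ^ 2))

/-- the half-length `ρ₂(k)`. -/
def rho2 (n p : ℕ) (X : Fin n → Fin p → ℝ) (shat : ℝ) (k : ℕ) : ℝ :=
  min (C2fun n p X k * k * Real.sqrt (Real.log p / n) * shat)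
    (Real.log p * (k * Real.sqrt (Real.log p / n) * shat))

/-- `u` is a solution `û` of the constrained minimization
`argmin {uᵀΣ̂u : ‖Σ̂u − ξ‖_∞ ≤ λ_n}`. -/
def IsUhat (n p : ℕ) (lamn : ℝ) (ξ : Fin p → ℝ) (X : Fin n → Fin p → ℝ)
    (u : Fin p → ℝ) : Prop :=
  vinf (fun j => (Sigmahat n p X).mulVec u j - ξ j) ≤ lamn ∧
    IsMinOn (fun v => v ⬝ᵥ (Sigmahat n p X).mulVec v)
      {v : Fin p → ℝ | vinf (fun j => (Sigmahat n p X).mulVec v j - ξ j) ≤ lamn} u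

/-- Auxiliary: the upper quantile `zquant a` is bounded above by a constant (for `a > 0`). -/
lemma zquant_le_bound {a : ℝ} (ha : 0 < a) : ∃ z₀ : ℝ, 0 ≤ z₀ ∧ zquant a ≤ z₀ := by
  obtain ⟨N, hN⟩ : ∃ N : ℕ, ((ProbabilityTheory.gaussianReal 0 1) (Set.Ioi (N : ℝ))).toReal ≤ a := by
    have hanti : Antitone (fun N : ℕ => Set.Ioi (N:ℝ)) := fun i j hij =>
      Set.Ioi_subset_Ioi (by exact_mod_cast hij)
    have hint : (⋂ N : ℕ, Set.Ioi (N:ℝ)) = ∅ := by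
      ext x
      simp only [Set.mem_iInter, Set.mem_Ioi, Set.mem_empty_iff_false, iff_false, not_forall,
        not_lt]
      obtain ⟨N, hNx⟩ := exists_nat_gt x
      exact ⟨N, hNx.le⟩
    have ht := MeasureTheory.tendsto_measure_iInter_atTop
      (μ := ProbabilityTheory.gaussianReal 0 1) (s := fun N : ℕ => Set.Ioi (N:ℝ))
      (fun N => measurableSet_Ioi.nullMeasurableSet) hanti
      ⟨0, MeasureTheory.measure_ne_top _ _⟩
    rw [hint, MeasureTheory.measure_empty] at ht
    have ht' := (ENNReal.tendsto_toReal (a := 0) (by simp)).comp ht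
    simp only [ENNReal.toReal_zero] at ht'
    obtain ⟨N, hN⟩ := (ht'.eventually_lt_const ha).exists
    exact ⟨N, hN.le⟩
  refine ⟨N, Nat.cast_nonneg N, ?_⟩
  rw [zquant]
  by_cases hb : BddBelow {t : ℝ | ((ProbabilityTheory.gaussianReal 0 1) (Set.Ioi t)).toReal ≤ a}
  · exact csInf_le hb hN
  · rw [Real.sInf_of_not_bddBelow hb]; exact Nat.cast_nonneg N

/-- Auxiliary: Rayleigh-quotient bounds transfer to the eigenvalues. -/
lemma eig_bd {p : ℕ} (Ω : Matrix (Fin p) (Fin p) ℝ) (hHerm : Ω.IsHermitian) (M₁ : ℝ)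
    (hray : ∀ v : Fin p → ℝ, (1/M₁) * (∑ j, v j ^2) ≤ v ⬝ᵥ Ω.mulVec v ∧
      v ⬝ᵥ Ω.mulVec v ≤ M₁ * ∑ j, v j ^2)
    (i : Fin p) : 1/M₁ ≤ hHerm.eigenvalues i ∧ hHerm.eigenvalues i ≤ M₁ := by
  set v : Fin p → ℝ := ⇑(hHerm.eigenvectorBasis i) with hv
  have hmv : Ω.mulVec v = hHerm.eigenvalues i • v := hHerm.mulVec_eigenvectorBasis i
  have hvne : v ≠ 0 := by
    intro h
    apply hHerm.eigenvectorBasis.orthonormal.ne_zero i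
    ext j
    exact congrFun h j
  obtain ⟨j, hj⟩ := Function.ne_iff.1 hvne
  have hS : 0 < ∑ j, v j ^ 2 :=
    Finset.sum_pos' (fun _ _ => sq_nonneg _) ⟨j, Finset.mem_univ j, by
      have : v j ≠ 0 := hj
      positivity⟩
  have hdot : v ⬝ᵥ Ω.mulVec v = hHerm.eigenvalues i * ∑ j, v j ^ 2 := by
    rw [hmv, dotProduct_smul, smul_eq_mul]
    congr 1
    simp [dotProduct, sq]
  have h1 := (hray v).1
  have h2 := (hray v).2
  rw [hdot] at h1 h2
  constructor <;> nlinarith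

set_option maxHeartbeats 1600000 in
/-- **Lemma (control of the radii `ρ₁(k)` and `ρ₂(k)`).**
On the events `(G₁)-(G₅)`, `(S₁)`, `(S₂)`, `(B₁)`, if `0 < σ ≤ M₂` and
`k ≤ c_* n / log p` for a sufficiently small constant `c_* > 0`, then there are a
constant `C > 0` and an integer `p₀` (not depending on `X, y, β, ξ`) such that for all
`p ≥ p₀`:
`ρ₁(k) ≤ C ‖ξ‖₂ (1/√n + k log p / n) σ ≤ ‖ξ‖₂ log p (1/√n + k log p / n) σ̂` and
`ρ₂(k) ≤ C k √(log p / n) σ ≤ log p · k √(log p / n) σ̂`. -/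
theorem radius_control
    (α M₁ M₂ : ℝ) (hα₁ : 0 < α) (hα₂ : α < 1 / 2) (hM₁ : 1 < M₁) (hM₂ : 0 < M₂) :
    ∃ cstar : ℝ, 0 < cstar ∧ ∃ C : ℝ, 0 < C ∧ ∃ p₀ : ℕ,
      ∀ (n p k : ℕ) (X : Fin n → Fin p → ℝ) (hcols : ∀ j, ∃ i, X i j ≠ 0)
        (Ω : Matrix (Fin p) (Fin p) ℝ) (hHerm : Ω.IsHermitian)
        (hΩ : eigBounds Ω M₁)
        (ξ : Fin p → ℝ) (hξ : ξ ≠ 0)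
        (β : Fin p → ℝ) (hβ : sparsity β ≤ k)
        (ε : Fin n → ℝ) (σ : ℝ) (hσ : 0 < σ) (hσM : σ ≤ M₂)
        (y : Fin n → ℝ) (hy : y = fun i => (∑ j, X i j * β j) + ε i)
        (lam : ℝ) (hlam : lam = (1 + 0.01) * Real.sqrt (2 * 1.0048 * Real.log p / n))
        (bhat : Fin p → ℝ) (shat : ℝ) (uhat : Fin p → ℝ),
        p₀ ≤ p →
        Real.log p / n ≤ 1 / 25 → 2 < 1.0048 * Real.log p →
        (k : ℝ) ≤ cstar * n / Real.log p →
        IsScaledLasso n p lam X y bhat shat →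
        IsUhat n p (12 * l2 ξ * M₁ ^ 2 * Real.sqrt (Real.log p / n)) ξ X uhat →
        -- event (G₁)
        (∀ j, 2 / (5 * Real.sqrt M₁) < colNorm n p X j / Real.sqrt n ∧
          colNorm n p X j / Real.sqrt n < 7 * Real.sqrt M₁ / 5) →
        -- event (G₂)
        |(sigOra n p X y β) ^ 2 / σ ^ 2 - 1| ≤
          2 * Real.sqrt (Real.log p / n) + 2 * (Real.log p / n) →
        -- event (G₃)
        (max |(ξ ⬝ᵥ (Sigmahat n p X).mulVec ξ) / (ξ ⬝ᵥ (Ω⁻¹).mulVec ξ) - 1|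
            |((Ω.mulVec ξ) ⬝ᵥ (Sigmahat n p X).mulVec (Ω.mulVec ξ)) /
                (ξ ⬝ᵥ Ω.mulVec ξ) - 1| ≤
          2 * Real.sqrt (Real.log p / n) + 2 * (Real.log p / n)) →
        -- event (G₄)
        (kappa n p X k (405 * (maxCol n p X / minCol n p X)) ≥
          1 / (4 * Real.sqrt (⨆ i, hHerm.eigenvalues i)) -
            9 * (1 + 405 * (maxCol n p X / minCol n p X)) *
              Real.sqrt (k * Real.log p / n) /
                Real.sqrt (⨅ i, hHerm.eigenvalues i)) →
        -- event (G₅)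
        vinf (fun j => (∑ i, Wmat n p X i j * ε i) / n) ≤
          σ * Real.sqrt (2 * 1.0048 * Real.log p / n) →
        -- event (S₁)
        vinf (fun j => (∑ i, Wmat n p X i j * ε i) / n) ≤
          sigOra n p X y β * lam * ((202 - 1) / (202 + 1)) *
            (1 - tau n p 202 lam X y β) →
        -- event (S₂)
        (1 - 0.01) * shat ≤ σ → σ ≤ (1 + 0.01) * shat →
        -- event (B₁)
        vinf (fun j => Matrix.vecMul ξ (Ω * Sigmahat n p X) j - ξ j) ≤
          12 * l2 ξ * M₁ ^ 2 * Real.sqrt (Real.log p / n) →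
        (rho1 n p α M₁ ξ X uhat shat k ≤
            C * l2 ξ * (1 / Real.sqrt n + k * Real.log p / n) * σ ∧
          C * l2 ξ * (1 / Real.sqrt n + k * Real.log p / n) * σ ≤
            l2 ξ * Real.log p * (1 / Real.sqrt n + k * Real.log p / n) * shat ∧
          rho2 n p X shat k ≤ C * (k * Real.sqrt (Real.log p / n)) * σ ∧
          C * (k * Real.sqrt (Real.log p / n)) * σ ≤
            Real.log p * (k * Real.sqrt (Real.log p / n)) * shat) := by
  have hM₁0 : (0:ℝ) < M₁ := by linarith
  have hs0 : (1:ℝ) ≤ Real.sqrt M₁ := Real.one_le_sqrt.2 hM₁.le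
  have hs2 : Real.sqrt M₁ ^ 2 = M₁ := Real.sq_sqrt hM₁0.le
  have hsMpos : 0 < Real.sqrt M₁ := by linarith
  have hsM : Real.sqrt M₁ ≤ M₁ := by nlinarith
  obtain ⟨z₀, hz₀, hzle⟩ := zquant_le_bound (show (0:ℝ) < α/2 by linarith)
  set Czq : ℝ := 1.01 * Real.sqrt (1.48*M₁) * z₀ with hCzqdef
  have hCzq : 0 ≤ Czq := mul_nonneg (by positivity) hz₀
  set K₁ : ℝ := 7000*M₁^2*(5*M₁/2)*(114402*M₁^2) with hK₁def
  set K₂ : ℝ := 822*(5*M₁/2)*(114402*M₁^2) with hK₂def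
  have hK₁ : 0 < K₁ := by rw [hK₁def]; positivity
  have hK₂ : 0 < K₂ := by rw [hK₂def]; positivity
  set C : ℝ := (Czq + K₁ + K₂ + 1)/0.99 with hCdef
  have hC : 0 < C := by rw [hCdef]; positivity
  have hC99 : 0.99*C = Czq + K₁ + K₂ + 1 := by rw [hCdef]; ring
  refine ⟨(1 / (72*M₁^2*(1+1418*M₁)))^2, by positivity, C, hC, ⌈Real.exp (1.01*C)⌉₊, ?_⟩
  intro n p k X hcols Ω hHerm hΩ ξ hξ β hβ ε σ hσ hσM y hy lam hlam bhat shat uhat hpp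
    hlpn hlp2 hk hSL hU hG1 hG2 hG3 hG4 hG5 hS1 hS2a hS2b hB1
  have hp : 0 < p := by
    rcases Nat.eq_zero_or_pos p with h | h
    · exfalso; apply hξ; subst h; funext i; exact i.elim0
    · exact h
  haveI : Nonempty (Fin p) := ⟨⟨0, hp⟩⟩
  have hlogp : 0 < Real.log p := by linarith
  have hn : 0 < n := by
    by_contra hn0
    push_neg at hn0
    have hn0' : n = 0 := Nat.le_zero.1 hn0
    subst hn0'
    have h := (hG1 (Classical.arbitrary (Fin p))).1
    simp only [Nat.cast_zero, Real.sqrt_zero, div_zero] at h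
    have h2 : 0 < 2/(5*Real.sqrt M₁) := by positivity
    linarith
  have hn' : (0:ℝ) < n := by exact_mod_cast hn
  have hsn : 0 < Real.sqrt n := Real.sqrt_pos.2 hn'
  have hsn2 : Real.sqrt n ^ 2 = (n:ℝ) := Real.sq_sqrt hn'.le
  have hlpn0 : 0 ≤ Real.log p / n := by positivity
  have hklpn0 : 0 ≤ (k:ℝ) * Real.log p / n := by positivity
  have hshat : 0 < shat := hSL.1
  -- basic facts about ξ
  obtain ⟨j₁, hj₁⟩ := Function.ne_iff.1 hξ
  have hE : 0 < ∑ j, ξ j ^ 2 :=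
    Finset.sum_pos' (fun _ _ => sq_nonneg _)
      ⟨j₁, Finset.mem_univ _, lt_of_le_of_ne (sq_nonneg _) (Ne.symm (pow_ne_zero 2 hj₁))⟩
  have hl2pos : 0 < l2 ξ := by rw [l2]; exact Real.sqrt_pos.2 hE
  have hl2sq : l2 ξ ^ 2 = ∑ j, ξ j ^ 2 := by
    rw [l2]; exact Real.sq_sqrt (Finset.sum_nonneg fun _ _ => sq_nonneg _)
  -- column norm facts
  have hminCol : 2/(5*Real.sqrt M₁) * Real.sqrt n ≤ minCol n p X := by
    rw [minCol]
    refine le_ciInf fun j => ?_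
    have h := (hG1 j).1
    rw [lt_div_iff₀ hsn] at h
    exact h.le
  have hminpos : 0 < minCol n p X := lt_of_lt_of_le (by positivity) hminCol
  have hmaxCol : maxCol n p X ≤ 7*Real.sqrt M₁/5 * Real.sqrt n := by
    rw [maxCol]
    refine ciSup_le fun j => ?_
    have h := (hG1 j).2
    rw [div_lt_iff₀ hsn] at h
    exact h.le
  have hmax0 : 0 ≤ maxCol n p X := by
    rw [maxCol]
    exact le_ciSup_of_le (Set.Finite.bddAbove (Set.finite_range _))
      (Classical.arbitrary _) (Real.sqrt_nonneg _)
  have hr : maxCol n p X / minCol n p X ≤ 7*M₁/2 := by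
    rw [div_le_iff₀ hminpos]
    have he : 7*M₁/2 * (2/(5*Real.sqrt M₁) * Real.sqrt n) = 7*Real.sqrt M₁/5 * Real.sqrt n := by
      have hne : Real.sqrt M₁ ≠ 0 := ne_of_gt hsMpos
      field_simp
      linear_combination (-1:ℝ)*hs2
    calc maxCol n p X ≤ 7*Real.sqrt M₁/5*Real.sqrt n := hmaxCol
      _ = 7*M₁/2 * (2/(5*Real.sqrt M₁)*Real.sqrt n) := he.symm
      _ ≤ 7*M₁/2 * minCol n p X := mul_le_mul_of_nonneg_left hminCol (by positivity)
  have hr0 : 0 ≤ maxCol n p X / minCol n p X := div_nonneg hmax0 hminpos.le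
  have hsndiv : Real.sqrt n / minCol n p X ≤ 5*M₁/2 := by
    rw [div_le_iff₀ hminpos]
    have he : Real.sqrt n = 5*Real.sqrt M₁/2 * (2/(5*Real.sqrt M₁)*Real.sqrt n) := by
      have hne : Real.sqrt M₁ ≠ 0 := ne_of_gt hsMpos
      field_simp
    calc Real.sqrt n = 5*Real.sqrt M₁/2 * (2/(5*Real.sqrt M₁)*Real.sqrt n) := he
      _ ≤ 5*Real.sqrt M₁/2 * minCol n p X := mul_le_mul_of_nonneg_left hminCol (by positivity)
      _ ≤ 5*M₁/2 * minCol n p X :=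
          mul_le_mul_of_nonneg_right (by linarith) hminpos.le
  -- sparsity budget
  have hklpcs : (k:ℝ)*Real.log p / n ≤ (1 / (72*M₁^2*(1+1418*M₁)))^2 := by
    rw [div_le_iff₀ hn']
    rw [le_div_iff₀ hlogp] at hk
    exact hk
  have hsqcs : Real.sqrt ((k:ℝ)*Real.log p/n) ≤ 1/(72*M₁^2*(1+1418*M₁)) := by
    have h := Real.sqrt_le_sqrt hklpcs
    rwa [Real.sqrt_sq (by positivity)] at h
  -- eigenvalue bounds
  have heig : ∀ i, 1/M₁ ≤ hHerm.eigenvalues i ∧ hHerm.eigenvalues i ≤ M₁ :=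
    fun i => eig_bd Ω hHerm M₁ (fun v => hΩ.2 v) i
  have hLle : (⨆ i, hHerm.eigenvalues i) ≤ M₁ := ciSup_le fun i => (heig i).2
  have hLpos : 0 < ⨆ i, hHerm.eigenvalues i :=
    lt_of_lt_of_le (show (0:ℝ) < 1/M₁ by positivity)
      (le_ciSup_of_le (Set.Finite.bddAbove (Set.finite_range _))
        (Classical.arbitrary _) (heig _).1)
  have hlge : 1/M₁ ≤ ⨅ i, hHerm.eigenvalues i := le_ciInf fun i => (heig i).1
  have hlpos : 0 < ⨅ i, hHerm.eigenvalues i :=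
    lt_of_lt_of_le (show (0:ℝ) < 1/M₁ by positivity) hlge
  have hsupsqrt : 1/(4*Real.sqrt M₁) ≤ 1/(4*Real.sqrt (⨆ i, hHerm.eigenvalues i)) := by
    have h1 : 0 < Real.sqrt (⨆ i, hHerm.eigenvalues i) := Real.sqrt_pos.2 hLpos
    exact one_div_le_one_div_of_le (by linarith)
      (by linarith [Real.sqrt_le_sqrt hLle])
  have hinvsqrtl : 1/Real.sqrt (⨅ i, hHerm.eigenvalues i) ≤ M₁ := by
    have h1 : 1/Real.sqrt M₁ ≤ Real.sqrt (⨅ i, hHerm.eigenvalues i) := by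
      rw [one_div, ← Real.sqrt_inv]
      exact Real.sqrt_le_sqrt (by rw [← one_div]; exact hlge)
    have h2 : 0 < 1/Real.sqrt M₁ := by positivity
    calc 1/Real.sqrt (⨅ i, hHerm.eigenvalues i) ≤ 1/(1/Real.sqrt M₁) :=
          one_div_le_one_div_of_le h2 h1
      _ = Real.sqrt M₁ := one_div_one_div _
      _ ≤ M₁ := hsM
  -- restricted eigenvalue lower bound
  have hκ : 1/(8*Real.sqrt M₁) ≤ kappa n p X k (405*(maxCol n p X/minCol n p X)) := by
    have hsl : 0 < Real.sqrt (⨅ i, hHerm.eigenvalues i) := Real.sqrt_pos.2 hlpos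
    have hsub : 9*(1+405*(maxCol n p X/minCol n p X)) *
        Real.sqrt ((k:ℝ)*Real.log p/n) / Real.sqrt (⨅ i, hHerm.eigenvalues i) ≤
        1/(8*Real.sqrt M₁) := by
      have e1 : 9*(1+405*(maxCol n p X/minCol n p X)) ≤ 9*(1+1418*M₁) := by linarith [hr]
      have hinv0 : 0 ≤ 1/Real.sqrt (⨅ i, hHerm.eigenvalues i) := by positivity
      calc 9*(1+405*(maxCol n p X/minCol n p X)) *
            Real.sqrt ((k:ℝ)*Real.log p/n) / Real.sqrt (⨅ i, hHerm.eigenvalues i)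
          = (9*(1+405*(maxCol n p X/minCol n p X)) * Real.sqrt ((k:ℝ)*Real.log p/n)) *
            (1/Real.sqrt (⨅ i, hHerm.eigenvalues i)) := by ring
        _ ≤ (9*(1+1418*M₁) * (1/(72*M₁^2*(1+1418*M₁)))) * M₁ := by
            apply mul_le_mul _ hinvsqrtl hinv0 (by positivity)
            exact mul_le_mul e1 hsqcs (Real.sqrt_nonneg _) (by positivity)
        _ = 1/(8*M₁) := by field_simp; ring
        _ ≤ 1/(8*Real.sqrt M₁) := one_div_le_one_div_of_le (by linarith) (by linarith)
    have hid : 1/(4*Real.sqrt M₁) - 1/(8*Real.sqrt M₁) = 1/(8*Real.sqrt M₁) := by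
      rw [div_sub_div _ _ (by positivity) (by positivity),
        div_eq_div_iff (by positivity) (by positivity)]
      ring
    linarith [hG4, hsupsqrt, hsub]
  have hκpos : 0 < kappa n p X k (405*(maxCol n p X/minCol n p X)) :=
    lt_of_lt_of_le (by positivity) hκ
  have hκsq : 1 ≤ kappa n p X k (405*(maxCol n p X/minCol n p X))^2 * (64*M₁) := by
    have h1 : (1/(8*Real.sqrt M₁))^2 ≤ kappa n p X k (405*(maxCol n p X/minCol n p X))^2 :=
      pow_le_pow_left₀ (by positivity) hκ 2
    have h2 : (1/(8*Real.sqrt M₁))^2 * (64*M₁) = 1 := by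
      rw [div_pow, one_pow, mul_pow, hs2, div_mul_eq_mul_div, one_mul,
        div_eq_one_iff_eq (by positivity)]
      ring
    calc (1:ℝ) = (1/(8*Real.sqrt M₁))^2 * (64*M₁) := h2.symm
      _ ≤ kappa n p X k (405*(maxCol n p X/minCol n p X))^2 * (64*M₁) :=
          mul_le_mul_of_nonneg_right h1 (by positivity)
  have hmaxsq : maxCol n p X^2 ≤ 49/25*M₁*n := by
    have h1 : maxCol n p X^2 ≤ (7*Real.sqrt M₁/5*Real.sqrt n)^2 :=
      pow_le_pow_left₀ hmax0 hmaxCol 2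
    have h2 : (7*Real.sqrt M₁/5*Real.sqrt n)^2 = 49/25*M₁*n := by
      rw [mul_pow, hsn2, div_pow, mul_pow, hs2]
      ring
    linarith [h1, h2.le, h2.ge]
  have h912 : 912*maxCol n p X^2 /
      ((n:ℝ)*(kappa n p X k (405*(maxCol n p X/minCol n p X)))^2) ≤ 114402*M₁^2 := by
    rw [div_le_iff₀ (by positivity)]
    have step1 : 912*maxCol n p X^2 ≤ 1787.52*(M₁*(n:ℝ)) := by linarith [hmaxsq]
    have step3 : 1787.53125*(M₁*(n:ℝ))*1 ≤
        1787.53125*(M₁*(n:ℝ))*(kappa n p X k (405*(maxCol n p X/minCol n p X))^2*(64*M₁)) :=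
      mul_le_mul_of_nonneg_left hκsq (by positivity)
    have step4 : 1787.53125*(M₁*(n:ℝ))*(kappa n p X k
        (405*(maxCol n p X/minCol n p X))^2*(64*M₁)) =
        114402*M₁^2*((n:ℝ)*kappa n p X k (405*(maxCol n p X/minCol n p X))^2) := by ring
    have hMn : (0:ℝ) ≤ M₁*(n:ℝ) := by positivity
    linarith [step1, step3, step4.le, step4.ge, hMn]
  have hmaxterm : max 1.25 (912*maxCol n p X^2 /
      ((n:ℝ)*(kappa n p X k (405*(maxCol n p X/minCol n p X)))^2)) ≤ 114402*M₁^2 :=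
    max_le (by
      have hM₁sq : (1:ℝ)*1 ≤ M₁*M₁ := mul_le_mul hM₁.le hM₁.le (by norm_num) (by linarith)
      linarith [hM₁sq]) h912
  have hmaxterm0 : (0:ℝ) ≤ max 1.25 (912*maxCol n p X^2 /
      ((n:ℝ)*(kappa n p X k (405*(maxCol n p X/minCol n p X)))^2)) :=
    le_trans (by norm_num) (le_max_left _ _)
  have hC1 : C1fun n p M₁ X k ≤ K₁ := by
    rw [C1fun, hK₁def]
    exact mul_le_mul (mul_le_mul_of_nonneg_left hsndiv (by positivity)) hmaxterm
      hmaxterm0 (by positivity)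
  have hC2 : C2fun n p X k ≤ K₂ := by
    rw [C2fun, hK₂def]
    exact mul_le_mul (mul_le_mul_of_nonneg_left hsndiv (by norm_num)) hmaxterm
      hmaxterm0 (by positivity)
  -- bound on the quadratic form at uhat
  have hSsymm : (Sigmahat n p X)ᵀ = Sigmahat n p X := by
    ext a b
    simp [Sigmahat, Matrix.transpose_apply, mul_comm]
  have hfun : (Sigmahat n p X).mulVec (Ω.mulVec ξ) = Matrix.vecMul ξ (Ω * Sigmahat n p X) := by
    rw [← Matrix.vecMul_vecMul]
    conv_rhs => rw [← hΩ.1]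
    rw [Matrix.vecMul_transpose]
    conv_rhs => rw [← hSsymm]
    rw [Matrix.vecMul_transpose]
  have hfeas : Ω.mulVec ξ ∈ {v : Fin p → ℝ |
      vinf (fun j => (Sigmahat n p X).mulVec v j - ξ j) ≤
        12 * l2 ξ * M₁ ^ 2 * Real.sqrt (Real.log p / n)} := by
    simp only [Set.mem_setOf_eq]
    rw [show (fun j => (Sigmahat n p X).mulVec (Ω.mulVec ξ) j - ξ j) =
      (fun j => Matrix.vecMul ξ (Ω * Sigmahat n p X) j - ξ j) from by rw [hfun]]
    exact hB1
  have hmin2 := isMinOn_iff.1 hU.2 (Ω.mulVec ξ) hfeas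
  have h048 : 2*Real.sqrt (Real.log p/n) + 2*(Real.log p/n) ≤ 0.48 := by
    have h5 : Real.sqrt (Real.log p/n) ≤ 1/5 := by
      rw [show (1:ℝ)/5 = Real.sqrt ((1/5)^2) from (Real.sqrt_sq (by norm_num)).symm]
      exact Real.sqrt_le_sqrt (by norm_num at hlpn ⊢; linarith)
    linarith
  have hξΩξ : 0 < ξ ⬝ᵥ Ω.mulVec ξ :=
    lt_of_lt_of_le (by positivity) (hΩ.2 ξ).1
  have hG3' := le_trans (le_max_right _ _) hG3
  have hvv : (Ω.mulVec ξ) ⬝ᵥ (Sigmahat n p X).mulVec (Ω.mulVec ξ) ≤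
      1.48 * (ξ ⬝ᵥ Ω.mulVec ξ) := by
    have h1 := (abs_le.1 hG3').2
    have h2 : (Ω.mulVec ξ) ⬝ᵥ (Sigmahat n p X).mulVec (Ω.mulVec ξ) / (ξ ⬝ᵥ Ω.mulVec ξ) ≤
        1.48 := by linarith [h1, h048]
    calc (Ω.mulVec ξ) ⬝ᵥ (Sigmahat n p X).mulVec (Ω.mulVec ξ)
        = ((Ω.mulVec ξ) ⬝ᵥ (Sigmahat n p X).mulVec (Ω.mulVec ξ) / (ξ ⬝ᵥ Ω.mulVec ξ)) *
          (ξ ⬝ᵥ Ω.mulVec ξ) := by field_simp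
      _ ≤ 1.48 * (ξ ⬝ᵥ Ω.mulVec ξ) := mul_le_mul_of_nonneg_right h2 hξΩξ.le
  have hΩle : ξ ⬝ᵥ Ω.mulVec ξ ≤ M₁ * l2 ξ^2 := by
    rw [hl2sq]; exact (hΩ.2 ξ).2
  have huu : uhat ⬝ᵥ (Sigmahat n p X).mulVec uhat ≤ 1.48*M₁*l2 ξ^2 := by
    have := hmin2
    linarith [hvv, hΩle]
  have hqdiv : (uhat ⬝ᵥ (Sigmahat n p X).mulVec uhat)/((n:ℝ)*l2 ξ^2) ≤ 1.48*M₁/n := by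
    rw [div_le_div_iff₀ (by positivity) hn']
    linarith [mul_le_mul_of_nonneg_right huu hn'.le]
  have hsqrtq : Real.sqrt ((uhat ⬝ᵥ (Sigmahat n p X).mulVec uhat)/((n:ℝ)*l2 ξ^2)) ≤
      Real.sqrt (1.48*M₁)/Real.sqrt n := by
    rw [← Real.sqrt_div (by positivity) (n:ℝ)]
    exact Real.sqrt_le_sqrt hqdiv
  have hzpart : 1.01 * Real.sqrt ((uhat ⬝ᵥ (Sigmahat n p X).mulVec uhat)/((n:ℝ)*l2 ξ^2)) *
      zquant (α/2) ≤ Czq * (1/Real.sqrt n) := by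
    have hrhs0 : 0 ≤ Czq * (1/Real.sqrt n) := mul_nonneg hCzq (by positivity)
    rcases le_or_gt (zquant (α/2)) 0 with hz | hz
    · have hmp : Real.sqrt ((uhat ⬝ᵥ (Sigmahat n p X).mulVec uhat)/((n:ℝ)*l2 ξ^2)) *
          zquant (α/2) ≤ 0 :=
        mul_nonpos_iff.2 (Or.inl ⟨Real.sqrt_nonneg _, hz⟩)
      linarith [hmp, hrhs0]
    · have h1 := mul_le_mul hsqrtq hzle hz.le (by positivity)
      calc 1.01 * Real.sqrt ((uhat ⬝ᵥ (Sigmahat n p X).mulVec uhat)/((n:ℝ)*l2 ξ^2)) *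
            zquant (α/2)
          = 1.01 * (Real.sqrt ((uhat ⬝ᵥ (Sigmahat n p X).mulVec uhat)/((n:ℝ)*l2 ξ^2)) *
            zquant (α/2)) := by ring
        _ ≤ 1.01 * ((Real.sqrt (1.48*M₁)/Real.sqrt n) * z₀) := by linarith
        _ = Czq * (1/Real.sqrt n) := by rw [hCzqdef]; ring
  have hbpart : C1fun n p M₁ X k * k * Real.log p / n ≤ K₁*((k:ℝ)*Real.log p/n) := by
    rw [show C1fun n p M₁ X k * (k:ℝ) * Real.log p / n =
      C1fun n p M₁ X k * ((k:ℝ)*Real.log p/n) from by ring]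
    exact mul_le_mul_of_nonneg_right hC1 hklpn0
  have hS0 : (0:ℝ) ≤ 1/Real.sqrt n + (k:ℝ)*Real.log p/n := by positivity
  have h1sn0 : (0:ℝ) ≤ 1/Real.sqrt n := by positivity
  have hterm1 : 1.01 * Real.sqrt ((uhat ⬝ᵥ (Sigmahat n p X).mulVec uhat)/((n:ℝ)*l2 ξ^2)) *
      zquant (α/2) + C1fun n p M₁ X k * k * Real.log p / n ≤
      0.99*C*(1/Real.sqrt n + (k:ℝ)*Real.log p/n) := by
    rw [hC99]
    have expand : (Czq+K₁+K₂+1)*(1/Real.sqrt n + (k:ℝ)*Real.log p/n) =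
        Czq*(1/Real.sqrt n) + K₁*((k:ℝ)*Real.log p/n) +
        ((K₁+K₂+1)*(1/Real.sqrt n) + (Czq+K₂+1)*((k:ℝ)*Real.log p/n)) := by ring
    have hres : 0 ≤ (K₁+K₂+1)*(1/Real.sqrt n) + (Czq+K₂+1)*((k:ℝ)*Real.log p/n) :=
      add_nonneg (mul_nonneg (by linarith) h1sn0) (mul_nonneg (by linarith) hklpn0)
    linarith [hzpart, hbpart, expand.le, expand.ge, hres]
  -- the p₀ condition
  have hlogC : 1.01*C ≤ Real.log p := by
    have h1 : Real.exp (1.01*C) ≤ ((⌈Real.exp (1.01*C)⌉₊ : ℕ):ℝ) := Nat.le_ceil _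
    have h2 : ((⌈Real.exp (1.01*C)⌉₊:ℕ):ℝ) ≤ (p:ℝ) := Nat.cast_le.2 hpp
    rw [Real.le_log_iff_exp_le (by exact_mod_cast hp)]
    linarith
  have hCσ : C*σ ≤ Real.log p * shat := by
    have h1 : σ ≤ 1.01*shat := by norm_num at hS2b ⊢; linarith
    calc C*σ ≤ C*(1.01*shat) := mul_le_mul_of_nonneg_left h1 hC.le
      _ = (1.01*C)*shat := by ring
      _ ≤ Real.log p * shat := mul_le_mul_of_nonneg_right hlogC hshat.le
  have hσ99 : 0.99*shat ≤ σ := by norm_num at hS2a ⊢; linarith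
  have hksq0 : (0:ℝ) ≤ (k:ℝ)*Real.sqrt (Real.log p/n) :=
    mul_nonneg (Nat.cast_nonneg k) (Real.sqrt_nonneg _)
  refine ⟨?_, ?_, ?_, ?_⟩
  · -- ρ₁ bound
    rw [rho1]
    calc l2 ξ * shat *
          min (1.01 * Real.sqrt ((uhat ⬝ᵥ (Sigmahat n p X).mulVec uhat) / (n * l2 ξ ^ 2)) *
            zquant (α / 2) + C1fun n p M₁ X k * k * Real.log p / n)
          (Real.log p * (1 / Real.sqrt n + k * Real.log p / n))
        ≤ l2 ξ * shat *
          (1.01 * Real.sqrt ((uhat ⬝ᵥ (Sigmahat n p X).mulVec uhat) / (n * l2 ξ ^ 2)) *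
            zquant (α / 2) + C1fun n p M₁ X k * k * Real.log p / n) :=
          mul_le_mul_of_nonneg_left (min_le_left _ _) (mul_nonneg hl2pos.le hshat.le)
      _ ≤ l2 ξ * shat * (0.99*C*(1/Real.sqrt n + (k:ℝ)*Real.log p/n)) :=
          mul_le_mul_of_nonneg_left hterm1 (mul_nonneg hl2pos.le hshat.le)
      _ = l2 ξ * (0.99*shat) * (C*(1/Real.sqrt n + (k:ℝ)*Real.log p/n)) := by ring
      _ ≤ l2 ξ * σ * (C*(1/Real.sqrt n + (k:ℝ)*Real.log p/n)) := by
          apply mul_le_mul_of_nonneg_right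
            (mul_le_mul_of_nonneg_left hσ99 hl2pos.le)
            (mul_nonneg hC.le hS0)
      _ = C * l2 ξ * (1/Real.sqrt n + (k:ℝ)*Real.log p/n) * σ := by ring
  · -- middle inequality for ρ₁
    calc C * l2 ξ * (1/Real.sqrt n + (k:ℝ)*Real.log p/n) * σ
        = (l2 ξ * (1/Real.sqrt n + (k:ℝ)*Real.log p/n)) * (C*σ) := by ring
      _ ≤ (l2 ξ * (1/Real.sqrt n + (k:ℝ)*Real.log p/n)) * (Real.log p * shat) :=
          mul_le_mul_of_nonneg_left hCσ (mul_nonneg hl2pos.le hS0)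
      _ = l2 ξ * Real.log p * (1/Real.sqrt n + (k:ℝ)*Real.log p/n) * shat := by ring
  · -- ρ₂ bound
    rw [rho2]
    calc min (C2fun n p X k * k * Real.sqrt (Real.log p / n) * shat)
          (Real.log p * (k * Real.sqrt (Real.log p / n) * shat))
        ≤ C2fun n p X k * k * Real.sqrt (Real.log p / n) * shat := min_le_left _ _
      _ ≤ K₂ * ((k:ℝ) * Real.sqrt (Real.log p / n) * shat) := by
          rw [show C2fun n p X k * (k:ℝ) * Real.sqrt (Real.log p / n) * shat =
            C2fun n p X k * ((k:ℝ) * Real.sqrt (Real.log p / n) * shat) from by ring]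
          exact mul_le_mul_of_nonneg_right hC2 (mul_nonneg hksq0 hshat.le)
      _ ≤ (0.99*C) * ((k:ℝ) * Real.sqrt (Real.log p / n) * shat) := by
          apply mul_le_mul_of_nonneg_right _ (mul_nonneg hksq0 hshat.le)
          rw [hC99]; linarith
      _ = (C * ((k:ℝ) * Real.sqrt (Real.log p / n))) * (0.99*shat) := by ring
      _ ≤ (C * ((k:ℝ) * Real.sqrt (Real.log p / n))) * σ :=
          mul_le_mul_of_nonneg_left hσ99 (mul_nonneg hC.le hksq0)
      _ = C * ((k:ℝ) * Real.sqrt (Real.log p / n)) * σ := by ring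
  · -- middle inequality for ρ₂
    calc C * ((k:ℝ) * Real.sqrt (Real.log p / n)) * σ
        = ((k:ℝ) * Real.sqrt (Real.log p / n)) * (C*σ) := by ring
      _ ≤ ((k:ℝ) * Real.sqrt (Real.log p / n)) * (Real.log p * shat) :=
          mul_le_mul_of_nonneg_left hCσ hksq0
      _ = Real.log p * ((k:ℝ) * Real.sqrt (Real.log p / n)) * shat := by ring


end CIHD
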